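/- Let D = (V, A, ψ) be a multidigraph, let s, t ∈ V, and let k ∈ ℕ. Let P and Q be two nonempty subsets of V with V = P ⊔ Q, and let C be a subset of A(P,Q). If B ∈ U_k satisfies S(B) = P and B ∩ A(P,Q) = C, then B \ C is an acyclic (k − |C|)-element subset of A satisfying S(B \ C) = P and T(B \ C) = Q. -/

import Mathlib

/-!
A multidigraph is given by two finite types `V` (vertices) and `A` (arcs)
together with a map `ψ : A → V × V` sending each arc to its (source, target) pair.
For a subset `B ⊆ A`, the induced subdigraph `D⟨B⟩` has vertex set `V` and arc set `B`.
-/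

/-- There is an arc of `B` from `v` to `w` in the subdigraph `D⟨B⟩`. -/
def ArcStep {V A : Type*} (ψ : A → V × V) (B : Set A) (v w : V) : Prop :=
  ∃ a ∈ B, ψ a = (v, w)

/-- `v` can `B`-reach `w`: the subdigraph `D⟨B⟩` has a walk from `v` to `w`. -/
def CanReach {V A : Type*} (ψ : A → V × V) (B : Set A) (v w : V) : Prop :=
  Relation.ReflTransGen (ArcStep ψ B) v w

/-- `B ⊆ A` is acyclic: the subdigraph `D⟨B⟩` has no directed cycles
(equivalently, no closed walk of positive length). -/
def IsAcyclic {V A : Type*} (ψ : A → V × V) (B : Set A) : Prop :=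
  ∀ v : V, ¬ Relation.TransGen (ArcStep ψ B) v v

/-- `B` is an `s`-convergence: `B` is acyclic and `s` is a to-root of `D⟨B⟩`,
i.e. every vertex can `B`-reach `s`. -/
def IsConvergence {V A : Type*} (ψ : A → V × V) (B : Set A) (s : V) : Prop :=
  IsAcyclic ψ B ∧ ∀ v : V, CanReach ψ B v s

/-- `γ_k(s)`: the number of `s`-convergences of size `k`. -/
noncomputable def gammaCount {V A : Type*} (ψ : A → V × V) (k : ℕ) (s : V) : ℕ :=
  {B : Set A | IsConvergence ψ B s ∧ B.ncard = k}.ncard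

/-- The attraction basin of `s` with respect to `B`: all vertices that can `B`-reach `s`. -/
def basin {V A : Type*} (ψ : A → V × V) (B : Set A) (s : V) : Set V :=
  {v : V | CanReach ψ B v s}

/-- `A(P,Q)`: the set of arcs with source in `P` and target in `Q`. -/
def arcsFromTo {V A : Type*} (ψ : A → V × V) (P Q : Set V) : Set A :=
  {a : A | (ψ a).1 ∈ P ∧ (ψ a).2 ∈ Q}

/-- The outdegree of a vertex: the number of arcs with source `v`. -/
noncomputable def outDeg {V A : Type*} (ψ : A → V × V) (v : V) : ℕ :=
  {a : A | (ψ a).1 = v}.ncard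

/-- The indegree of a vertex: the number of arcs with target `v`. -/
noncomputable def inDeg {V A : Type*} (ψ : A → V × V) (v : V) : ℕ :=
  {a : A | (ψ a).2 = v}.ncard

/-- The digraph is balanced: each vertex has outdegree equal to indegree. -/
def IsBalanced {V A : Type*} (ψ : A → V × V) : Prop :=
  ∀ v : V, outDeg ψ v = inDeg ψ v

/-- `U_k`: the set of all acyclic `k`-element subsets `B` of `A` such that each
vertex can `B`-reach `s` or can `B`-reach `t`. -/
def Uset {V A : Type*} (ψ : A → V × V) (s t : V) (k : ℕ) : Set (Set A) :=
  {B : Set A | IsAcyclic ψ B ∧ B.ncard = k ∧ basin ψ B s ∪ basin ψ B t = Set.univ}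

/-- `X_i^{P,Q}`: the set of all acyclic `i`-element subsets `B` of `A` with
`S(B) = P` and `T(B) = Q` (empty for negative `i`). -/
def Xset {V A : Type*} (ψ : A → V × V) (s t : V) (P Q : Set V) (i : ℤ) : Set (Set A) :=
  {B : Set A | IsAcyclic ψ B ∧ (B.ncard : ℤ) = i ∧ basin ψ B s = P ∧ basin ψ B t = Q}

/-- `|X_i^{P,Q}|`. -/
noncomputable def Xcount {V A : Type*} (ψ : A → V × V) (s t : V) (P Q : Set V) (i : ℤ) : ℕ :=
  (Xset ψ s t P Q i).ncard

/-- If `B ∈ U_k` satisfies `S(B) = P` and `B ∩ A(P,Q) = C`, then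
`B \ C` is an acyclic `(k − |C|)`-element subset of `A` with `S(B \ C) = P` and
`T(B \ C) = Q`. -/
theorem sdiff_mem_X {V A : Type*} [Fintype V] [Fintype A]
    (ψ : A → V × V) (s t : V) (k : ℕ)
    (P Q : Set V) (hP : P.Nonempty) (hQ : Q.Nonempty)
    (hunion : P ∪ Q = Set.univ) (hdisj : P ∩ Q = ∅)
    (C : Set A) (hC : C ⊆ arcsFromTo ψ P Q)
    (B : Set A) (hB : B ∈ Uset ψ s t k) (hSB : basin ψ B s = P)
    (hBC : B ∩ arcsFromTo ψ P Q = C) :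
    IsAcyclic ψ (B \ C) ∧ (B \ C).ncard = k - C.ncard ∧
      basin ψ (B \ C) s = P ∧ basin ψ (B \ C) t = Q := by
  obtain ⟨hac, hcard, huniv⟩ := hB
  have hCB : C ⊆ B := by rw [← hBC]; exact Set.inter_subset_left
  have hcover : ∀ v : V, v ∈ P ∨ v ∈ Q := by
    intro v
    have : v ∈ P ∪ Q := by rw [hunion]; trivial
    exact this
  have hnb : ∀ v : V, v ∈ P → v ∈ Q → False := by
    intro v h1 h2
    have : v ∈ P ∩ Q := ⟨h1, h2⟩
    rw [hdisj] at this; exact this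
  have hsP : ∀ v : V, CanReach ψ B v s → v ∈ P := by
    intro v hv; rw [← hSB]; exact hv
  have hPs : ∀ v : V, v ∈ P → CanReach ψ B v s := by
    intro v hv; rw [← hSB] at hv; exact hv
  have hQns : ∀ v : V, v ∈ Q → ¬ CanReach ψ B v s := by
    intro v hv hr
    exact hnb v (hsP v hr) hv
  -- any B-walk starting in Q stays in Q and avoids C
  have lemB : ∀ v w : V, CanReach ψ B v w → v ∈ Q → CanReach ψ (B \ C) v w ∧ w ∈ Q := by
    intro v w h
    induction h using Relation.ReflTransGen.head_induction_on with
    | refl => exact fun hv => ⟨Relation.ReflTransGen.refl, hv⟩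
    | head hab _ ih =>
      rename_i x y _
      intro hx
      obtain ⟨a, haB, hψ⟩ := hab
      have hy : y ∈ Q := by
        rcases hcover y with hyP | hyQ
        · exfalso
          have hys : CanReach ψ B y s := hPs y hyP
          have hxs : CanReach ψ B x s :=
            Relation.ReflTransGen.head ⟨a, haB, hψ⟩ hys
          exact hQns x hx hxs
        · exact hyQ
      have hanC : a ∉ C := by
        intro haC
        have h1 : (ψ a).1 ∈ P := (hC haC).1
        rw [hψ] at h1
        exact hnb x h1 hx
      obtain ⟨ih1, ih2⟩ := ih hy
      exact ⟨Relation.ReflTransGen.head ⟨a, ⟨haB, hanC⟩, hψ⟩ ih1, ih2⟩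
  -- any B-walk from a P-vertex to s stays in P and avoids C
  have lemA : ∀ v : V, CanReach ψ B v s → CanReach ψ (B \ C) v s := by
    intro v h
    induction h using Relation.ReflTransGen.head_induction_on with
    | refl => exact Relation.ReflTransGen.refl
    | head hab hbs ih =>
      obtain ⟨a, haB, hψ⟩ := hab
      refine Relation.ReflTransGen.head ⟨a, ⟨haB, ?_⟩, hψ⟩ ih
      intro haC
      have h2 : (ψ a).2 ∈ Q := (hC haC).2
      rw [hψ] at h2
      exact hnb _ (hsP _ hbs) h2
  -- any (B\C)-walk starting in P stays in P
  have lemC : ∀ v w : V, CanReach ψ (B \ C) v w → v ∈ P → w ∈ P := by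
    intro v w h hv
    induction h with
    | refl => exact hv
    | tail _ hab ih =>
      rename_i u z _
      obtain ⟨a, ⟨haB, hanC⟩, hψ⟩ := hab
      rcases hcover z with hzP | hzQ
      · exact hzP
      · exfalso
        apply hanC
        rw [← hBC]
        refine ⟨haB, ?_⟩
        show (ψ a).1 ∈ P ∧ (ψ a).2 ∈ Q
        rw [hψ]
        exact ⟨ih, hzQ⟩
  have hmono : ∀ v w : V, CanReach ψ (B \ C) v w → CanReach ψ B v w := by
    intro v w h
    exact Relation.ReflTransGen.mono (r := ArcStep ψ (B \ C)) (p := ArcStep ψ B) (fun x y ⟨a, ha, he⟩ => ⟨a, ha.1, he⟩) v w h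
  have htQ : t ∈ Q := by
    rcases hcover t with htP | htQ
    · exfalso
      obtain ⟨v, hv⟩ := hQ
      have hvt : CanReach ψ B v t := by
        have : v ∈ basin ψ B s ∪ basin ψ B t := by rw [huniv]; trivial
        rcases this with h1 | h2
        · exact absurd h1 (hQns v hv)
        · exact h2
      have hts : CanReach ψ B t s := hPs t htP
      exact hQns v hv (hvt.trans hts)
    · exact htQ
  refine ⟨?_, ?_, ?_, ?_⟩
  · intro v hv
    exact hac v (Relation.TransGen.mono (r := ArcStep ψ (B \ C)) (p := ArcStep ψ B) (fun x y ⟨a, ha, he⟩ => ⟨a, ha.1, he⟩) v v hv)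
  · rw [Set.ncard_diff hCB (Set.toFinite C), hcard]
  · ext v
    constructor
    · intro hv
      exact hsP v (hmono v s hv)
    · intro hv
      exact lemA v (hPs v hv)
  · ext v
    constructor
    · intro hv
      rcases hcover v with hvP | hvQ
      · exact absurd (lemC v t hv hvP) (fun h => hnb t h htQ)
      · exact hvQ
    · intro hv
      have hvt : CanReach ψ B v t := by
        have : v ∈ basin ψ B s ∪ basin ψ B t := by rw [huniv]; trivial
        rcases this with h1 | h2
        · exact absurd h1 (hQns v hv)
        · exact h2
      exact (lemB v t hvt hv).1
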